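/- Fix k and suppose: subgradients p_F ∈ ∂F(x^{k+1}) and p_G ∈ ∂G*(y^{k+1}); the splitting inequalities ‖u^k − ū‖² ≥ γ_B‖u^{k+1} − ū‖² − π_u‖x^k − x̄‖² and ‖w^k − w̄‖² ≥ γ_B‖w^{k+1} − w̄‖² − C_Q‖u^{k+1} − ū‖² − π_w‖x^k − x̄‖²; positive parameters η_k, η_{k+1}, λ_k, λ_{k+1}, θ_k, θ_{k+1}, ε_u, ε_w, μ and parameters γ̃_F ∈ [0, γ_F], γ̃_{G*} ∈ [0, γ_{G*}] satisfying: γ_F ≥ γ̃_F + ε_u + ε_w + (λ_{k+1}π_u + θ_{k+1}π_w)/η_k; γ_{G*} ≥ γ̃_{G*}; γ_B ≥ λ_{k+1}/λ_k + (θ_k/λ_k)·C_Q + η_k·S(w̄)/(4ε_w λ_k) + C_x·μ·η_k/(2λ_k); and γ_B ≥ θ_{k+1}/θ_k + η_k·S(ū)/(4ε_u θ_k) + C_x·η_k/(2μ θ_k). Then η_k⟨p_F + ∇̄_xB(u^{k+1}, w^{k+1}) + K*y^{k+1}, x^{k+1} − x̄⟩ + η_{k+1}⟨p_G − Kx^{k+1},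 y^{k+1} − ȳ⟩ ≥ η_k γ̃_F‖x^{k+1} − x̄‖² + (η_k − η_{k+1})⟨K(x^{k+1} − x̄), y^{k+1} − ȳ⟩ + η_{k+1} γ̃_{G*}‖y^{k+1} − ȳ‖² + (λ_{k+1}π_u + θ_{k+1}π_w)‖x^{k+1} − x̄‖² − (λ_kπ_u + θ_kπ_w)‖x^k − x̄‖² + λ_{k+1}‖u^{k+1} − ū‖² − λ_k‖u^k − ū‖² + θ_{k+1}‖w^{k+1} − w̄‖² − θ_k‖w^k − w̄‖². -/

import Mathlib

local notation "⟪" x ", " y "⟫" => @inner ℝ _ _ x y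

/-- `F` is proper: nowhere `⊥` and somewhere finite. -/
def ERealProper {Z : Type*} (F : Z → EReal) : Prop :=
  (∀ z, F z ≠ ⊥) ∧ (∃ z, F z ≠ ⊤)

/-- `F` is `γ`-strongly convex. -/
def ERealStronglyConvex {Z : Type*} [NormedAddCommGroup Z] [InnerProductSpace ℝ Z]
    (γ : ℝ) (F : Z → EReal) : Prop :=
  ∀ x y : Z, ∀ a b : ℝ, 0 ≤ a → 0 ≤ b → a + b = 1 →
    F (a • x + b • y) + ((γ / 2 * (a * b) * ‖x - y‖ ^ 2 : ℝ) : EReal)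
      ≤ (a : EReal) * F x + (b : EReal) * F y

/-- The (convex) subdifferential of `F : Z → EReal` at `z₀` (set of Riesz
representatives of subgradients). -/
def ERealSubdiff {Z : Type*} [NormedAddCommGroup Z] [InnerProductSpace ℝ Z]
    (F : Z → EReal) (z₀ : Z) : Set Z :=
  {p | ∀ z : Z, F z₀ + ((⟪p, z - z₀⟫ : ℝ) : EReal) ≤ F z}

/-- Riesz representation `∇̄_x B(u,w)` of `x ↦ B_x(u,w;x) = b₂(w,x) + b₃(u,w,x)`. -/
noncomputable def gradxB {U W X : Type*}
    [NormedAddCommGroup U] [InnerProductSpace ℝ U]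
    [NormedAddCommGroup W] [InnerProductSpace ℝ W]
    [NormedAddCommGroup X] [InnerProductSpace ℝ X] [CompleteSpace X]
    (b₂ : W →L[ℝ] X →L[ℝ] ℝ) (b₃ : U →L[ℝ] W →L[ℝ] X →L[ℝ] ℝ)
    (u : U) (w : W) : X :=
  (InnerProductSpace.toDual ℝ X).symm (b₂ w + b₃ u w)


lemma subdiff_ne_top {Z : Type*} [NormedAddCommGroup Z] [InnerProductSpace ℝ Z]
    {F : Z → EReal} (hp : ERealProper F) {x p : Z} (hpx : p ∈ ERealSubdiff F x) :
    F x ≠ ⊤ := by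
  obtain ⟨z₀, hz₀⟩ := hp.2
  intro hx
  have h := hpx z₀
  rw [hx, EReal.top_add_coe] at h
  exact hz₀ (top_le_iff.mp h)

lemma strong_subgrad {Z : Type*} [NormedAddCommGroup Z] [InnerProductSpace ℝ Z]
    {γ : ℝ} (hγ : 0 ≤ γ) {F : Z → EReal}
    (hsc : ERealStronglyConvex γ F) {x y p : Z} (hpx : p ∈ ERealSubdiff F x)
    {fx fy : ℝ} (hfx : F x = (fx : EReal)) (hfy : F y = (fy : EReal)) :
    ⟪p, y - x⟫ + γ / 2 * ‖x - y‖ ^ 2 ≤ fy - fx := by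
  set P : ℝ := ⟪p, y - x⟫ with hP
  set N : ℝ := ‖x - y‖ ^ 2 with hN
  have hN0 : 0 ≤ N := by positivity
  have key : ∀ t : ℝ, 0 < t → t < 1 → P + γ / 2 * (1 - t) * N ≤ fy - fx := by
    intro t ht0 ht1
    have hsc' := hsc x y (1 - t) t (by linarith) (by linarith) (by ring)
    have hsub := hpx ((1 - t) • x + t • y)
    have hz : (1 - t) • x + t • y - x = t • (y - x) := by
      rw [sub_smul, one_smul, smul_sub]; abel
    rw [hz, real_inner_smul_right, hfx] at hsub
    have hchain : ((fx + t * P : ℝ) : EReal) + ((γ / 2 * ((1 - t) * t) * N : ℝ) : EReal)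
        ≤ ((1 - t : ℝ) : EReal) * ((fx : ℝ) : EReal) + ((t : ℝ) : EReal) * ((fy : ℝ) : EReal) := by
      calc ((fx + t * P : ℝ) : EReal) + ((γ / 2 * ((1 - t) * t) * N : ℝ) : EReal)
          ≤ F ((1 - t) • x + t • y) + ((γ / 2 * ((1 - t) * t) * N : ℝ) : EReal) := by
            refine add_le_add ?_ le_rfl
            exact_mod_cast hsub
        _ ≤ _ := by rw [← hfx, ← hfy]; exact hsc'
    have hreal : fx + t * P + γ / 2 * ((1 - t) * t) * N ≤ (1 - t) * fx + t * fy := by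
      have : (((fx + t * P) + γ / 2 * ((1 - t) * t) * N : ℝ) : EReal)
          ≤ (((1 - t) * fx + t * fy : ℝ) : EReal) := by
        push_cast
        exact_mod_cast hchain
      exact_mod_cast this
    nlinarith [hreal, ht0]
  by_contra h
  push_neg at h
  set δ : ℝ := P + γ / 2 * N - (fy - fx) with hδ
  have hδ0 : 0 < δ := by simp [hδ]; linarith
  set t : ℝ := min (1/2) (δ / (γ * N + 1)) with htdef
  have hden : 0 < γ * N + 1 := by nlinarith
  have ht0 : 0 < t := lt_min (by norm_num) (div_pos hδ0 hden)
  have ht1 : t < 1 := lt_of_le_of_lt (min_le_left _ _) (by norm_num)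
  have hbound : γ / 2 * t * N ≤ δ / 2 := by
    have h1 : t ≤ δ / (γ * N + 1) := min_le_right _ _
    have h2 : γ * N * t ≤ γ * N * (δ / (γ * N + 1)) := by
      apply mul_le_mul_of_nonneg_left h1 (by positivity)
    have h3 : γ * N * (δ / (γ * N + 1)) ≤ δ := by
      have he : γ * N * (δ / (γ * N + 1)) = δ * (γ * N) / (γ * N + 1) := by ring
      rw [he, div_le_iff₀ hden]
      nlinarith
    nlinarith
  have := key t ht0 ht1
  nlinarith

lemma subdiff_smono {Z : Type*} [NormedAddCommGroup Z] [InnerProductSpace ℝ Z]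
    {γ : ℝ} (hγ : 0 ≤ γ) {F : Z → EReal} (hp : ERealProper F)
    (hsc : ERealStronglyConvex γ F) {x y p q : Z}
    (hpx : p ∈ ERealSubdiff F x) (hqy : q ∈ ERealSubdiff F y) :
    γ * ‖x - y‖ ^ 2 ≤ ⟪p - q, x - y⟫ := by
  have hfx : F x = ((F x).toReal : EReal) :=
    (EReal.coe_toReal (subdiff_ne_top hp hpx) (hp.1 x)).symm
  have hfy : F y = ((F y).toReal : EReal) :=
    (EReal.coe_toReal (subdiff_ne_top hp hqy) (hp.1 y)).symm
  have h1 := strong_subgrad hγ hsc hpx hfx hfy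
  have h2 := strong_subgrad hγ hsc hqy hfy hfx
  have e1 : ⟪p, y - x⟫ = -⟪p, x - y⟫ := by
    rw [show y - x = -(x - y) by abel, inner_neg_right]
  have e2 : ‖y - x‖ = ‖x - y‖ := norm_sub_rev _ _
  have e3 : ⟪p - q, x - y⟫ = ⟪p, x - y⟫ - ⟪q, x - y⟫ := inner_sub_left _ _ _
  rw [e1] at h1
  rw [e2] at h2
  rw [e3]
  linarith

lemma young_aux (s a b ε : ℝ) (hs : 0 ≤ s) (hε : 0 < ε) :
    Real.sqrt s * b * a ≤ ε * a ^ 2 + s * b ^ 2 / (4 * ε) := by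
  set q := Real.sqrt s with hq
  have hq2 : q ^ 2 = s := Real.sq_sqrt hs
  rw [← hq2, ← sub_nonneg]
  have he : ε * a ^ 2 + q ^ 2 * b ^ 2 / (4 * ε) - q * b * a
      = (2 * ε * a - q * b) ^ 2 / (4 * ε) := by
    field_simp
    ring
  rw [he]
  positivity

lemma young_aux2 (C u w μ : ℝ) (hC : 0 ≤ C) (hμ : 0 < μ) :
    C * u * w ≤ C * μ * u ^ 2 / 2 + C * w ^ 2 / (2 * μ) := by
  have h : u * w ≤ μ * u ^ 2 / 2 + w ^ 2 / (2 * μ) := by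
    rw [← sub_nonneg]
    have he : μ * u ^ 2 / 2 + w ^ 2 / (2 * μ) - u * w = (μ * u - w) ^ 2 / (2 * μ) := by
      field_simp
      ring
    rw [he]; positivity
  calc C * u * w = C * (u * w) := by ring
    _ ≤ C * (μ * u ^ 2 / 2 + w ^ 2 / (2 * μ)) := mul_le_mul_of_nonneg_left h hC
    _ = C * μ * u ^ 2 / 2 + C * w ^ 2 / (2 * μ) := by ring

set_option maxHeartbeats 2000000 in
/-- Three-point growth estimate for the operator `H_k` (Lemma 3.5). -/
theorem Hk_three_point_estimate
    {X Y U W : Type*}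
    [NormedAddCommGroup X] [InnerProductSpace ℝ X] [CompleteSpace X]
    [NormedAddCommGroup Y] [InnerProductSpace ℝ Y] [CompleteSpace Y]
    [NormedAddCommGroup U] [InnerProductSpace ℝ U] [CompleteSpace U]
    [NormedAddCommGroup W] [InnerProductSpace ℝ W] [CompleteSpace W]
    (K : X →L[ℝ] Y)
    (F : X → EReal) (Gs : Y → EReal) (γF γGs : ℝ)
    (hγF : 0 ≤ γF) (hγGs : 0 ≤ γGs)
    (hFp : ERealProper F) (hGsp : ERealProper Gs)
    (hFsc : ERealStronglyConvex γF F) (hGssc : ERealStronglyConvex γGs Gs)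
    (b₂ : W →L[ℝ] X →L[ℝ] ℝ) (b₃ : U →L[ℝ] W →L[ℝ] X →L[ℝ] ℝ)
    -- the fixed point v̄ = (ū, w̄, x̄, ȳ)
    (ub : U) (wb : W) (xb : X) (yb : Y)
    (hfix1 : -gradxB b₂ b₃ ub wb - ContinuousLinearMap.adjoint K yb
        ∈ ERealSubdiff F xb)
    (hfix2 : K xb ∈ ERealSubdiff Gs yb)
    -- the iterates
    (uk uk1 : U) (wk wk1 : W) (xk xk1 : X) (yk1 : Y)
    -- growth constants
    (Su Sw Cx : ℝ) (hSu : 0 ≤ Su) (hSw : 0 ≤ Sw) (hCx : 0 ≤ Cx)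
    (hgrow1 : ∀ u : U, b₃ u wb (xk1 - xb) ≤ Real.sqrt Sw * ‖u‖ * ‖xk1 - xb‖)
    (hgrow2 : ∀ w : W,
      b₂ w (xk1 - xb) + b₃ ub w (xk1 - xb) ≤ Real.sqrt Su * ‖w‖ * ‖xk1 - xb‖)
    (hgrow3 : ∀ (u : U) (w : W), b₃ u w (xk1 - xb) ≤ Cx * ‖u‖ * ‖w‖)
    -- splitting constants and inequalities
    (γB CQ πu πw : ℝ) (hγB : 0 < γB) (hCQ : 0 ≤ CQ) (hπu : 0 ≤ πu) (hπw : 0 ≤ πw)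
    (hsplit1 : ‖uk - ub‖ ^ 2 ≥ γB * ‖uk1 - ub‖ ^ 2 - πu * ‖xk - xb‖ ^ 2)
    (hsplit2 : ‖wk - wb‖ ^ 2 ≥ γB * ‖wk1 - wb‖ ^ 2 - CQ * ‖uk1 - ub‖ ^ 2
        - πw * ‖xk - xb‖ ^ 2)
    -- subgradients
    (pF : X) (hpF : pF ∈ ERealSubdiff F xk1)
    (pG : Y) (hpG : pG ∈ ERealSubdiff Gs yk1)
    -- parameters and balance conditions
    (ηk ηk1 lamk lamk1 θk θk1 εu εw μ γtF γtGs : ℝ)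
    (hηk : 0 < ηk) (hηk1 : 0 < ηk1)
    (hlamk : 0 < lamk) (hlamk1 : 0 < lamk1) (hθk : 0 < θk) (hθk1 : 0 < θk1)
    (hεu : 0 < εu) (hεw : 0 < εw) (hμ : 0 < μ)
    (hγtF0 : 0 ≤ γtF) (hγtF : γtF ≤ γF) (hγtGs0 : 0 ≤ γtGs) (hγtGs : γtGs ≤ γGs)
    (hbal1 : γF ≥ γtF + εu + εw + (lamk1 * πu + θk1 * πw) / ηk)
    (hbal2 : γGs ≥ γtGs)
    (hbal3 : γB ≥ lamk1 / lamk + (θk / lamk) * CQ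
        + ηk * Sw / (4 * εw * lamk) + Cx * μ * ηk / (2 * lamk))
    (hbal4 : γB ≥ θk1 / θk + ηk * Su / (4 * εu * θk) + Cx * ηk / (2 * μ * θk)) :
    ηk * ⟪pF + gradxB b₂ b₃ uk1 wk1 + ContinuousLinearMap.adjoint K yk1, xk1 - xb⟫
        + ηk1 * ⟪pG - K xk1, yk1 - yb⟫
      ≥ ηk * γtF * ‖xk1 - xb‖ ^ 2
        + (ηk - ηk1) * ⟪K (xk1 - xb), yk1 - yb⟫
        + ηk1 * γtGs * ‖yk1 - yb‖ ^ 2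
        + (lamk1 * πu + θk1 * πw) * ‖xk1 - xb‖ ^ 2
        - (lamk * πu + θk * πw) * ‖xk - xb‖ ^ 2
        + lamk1 * ‖uk1 - ub‖ ^ 2 - lamk * ‖uk - ub‖ ^ 2
        + θk1 * ‖wk1 - wb‖ ^ 2 - θk * ‖wk - wb‖ ^ 2 := by
  have hgrad : ∀ (u : U) (w : W) (z : X), ⟪gradxB b₂ b₃ u w, z⟫ = b₂ w z + b₃ u w z := by
    intro u w z
    simp [gradxB, inner_add_left, InnerProductSpace.toDual_symm_apply]
  have hF := subdiff_smono hγF hFp hFsc hpF hfix1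
  have hG := subdiff_smono hγGs hGsp hGssc hpG hfix2
  have e1 : ⟪pF - (-gradxB b₂ b₃ ub wb - ContinuousLinearMap.adjoint K yb), xk1 - xb⟫
      = ⟪pF, xk1 - xb⟫ + (b₂ wb (xk1 - xb) + b₃ ub wb (xk1 - xb)) + ⟪yb, K (xk1 - xb)⟫ := by
    simp only [sub_sub_cancel, sub_neg_eq_add, inner_add_left, inner_sub_left, inner_neg_left,
      hgrad, ContinuousLinearMap.adjoint_inner_left]
    ring
  have e2 : ⟪pF + gradxB b₂ b₃ uk1 wk1 + ContinuousLinearMap.adjoint K yk1, xk1 - xb⟫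
      = ⟪pF, xk1 - xb⟫ + (b₂ wk1 (xk1 - xb) + b₃ uk1 wk1 (xk1 - xb)) + ⟪yk1, K (xk1 - xb)⟫ := by
    simp only [inner_add_left, hgrad, ContinuousLinearMap.adjoint_inner_left]
  have e3 : ⟪pG - K xk1, yk1 - yb⟫
      = ⟪pG - K xb, yk1 - yb⟫ - ⟪K (xk1 - xb), yk1 - yb⟫ := by
    rw [map_sub]
    rw [inner_sub_left, inner_sub_left, inner_sub_left]
    ring
  have e4 : ⟪yk1, K (xk1 - xb)⟫ - ⟪yb, K (xk1 - xb)⟫ = ⟪K (xk1 - xb), yk1 - yb⟫ := by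
    rw [show (⟪K (xk1 - xb), yk1 - yb⟫ : ℝ) = ⟪yk1 - yb, K (xk1 - xb)⟫ from
      real_inner_comm _ _, inner_sub_left]
  have eT : b₂ wk1 (xk1 - xb) + b₃ uk1 wk1 (xk1 - xb)
      - (b₂ wb (xk1 - xb) + b₃ ub wb (xk1 - xb))
      = (b₂ (wk1 - wb) (xk1 - xb) + b₃ ub (wk1 - wb) (xk1 - xb))
        + b₃ (uk1 - ub) wb (xk1 - xb) + b₃ (uk1 - ub) (wk1 - wb) (xk1 - xb) := by
    simp only [map_sub, ContinuousLinearMap.sub_apply]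
    ring
  -- growth bounds on negatives
  have g1 := hgrow1 (-(uk1 - ub))
  have g2 := hgrow2 (-(wk1 - wb))
  have g3 := hgrow3 (-(uk1 - ub)) (wk1 - wb)
  simp only [map_neg, ContinuousLinearMap.neg_apply, norm_neg] at g1 g2 g3
  -- Young
  have y1 := young_aux Su ‖xk1 - xb‖ ‖wk1 - wb‖ εu hSu hεu
  have y2 := young_aux Sw ‖xk1 - xb‖ ‖uk1 - ub‖ εw hSw hεw
  have y3 := young_aux2 Cx ‖uk1 - ub‖ ‖wk1 - wb‖ μ hCx hμ
  -- bound on the bilinear difference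
  have hT : b₂ wk1 (xk1 - xb) + b₃ uk1 wk1 (xk1 - xb)
      ≥ (b₂ wb (xk1 - xb) + b₃ ub wb (xk1 - xb))
        - (εu * ‖xk1 - xb‖ ^ 2 + Su * ‖wk1 - wb‖ ^ 2 / (4 * εu))
        - (εw * ‖xk1 - xb‖ ^ 2 + Sw * ‖uk1 - ub‖ ^ 2 / (4 * εw))
        - (Cx * μ * ‖uk1 - ub‖ ^ 2 / 2 + Cx * ‖wk1 - wb‖ ^ 2 / (2 * μ)) := by
    linarith [eT, g1, g2, g3, y1, y2, y3]
  -- scaled balance conditions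
  have hηne : ηk ≠ 0 := ne_of_gt hηk
  have hlamne : lamk ≠ 0 := ne_of_gt hlamk
  have hθne : θk ≠ 0 := ne_of_gt hθk
  have B1 : ηk * γtF + ηk * εu + ηk * εw + (lamk1 * πu + θk1 * πw) ≤ ηk * γF := by
    calc ηk * γtF + ηk * εu + ηk * εw + (lamk1 * πu + θk1 * πw)
        = ηk * (γtF + εu + εw + (lamk1 * πu + θk1 * πw) / ηk) := by field_simp
      _ ≤ ηk * γF := mul_le_mul_of_nonneg_left hbal1 hηk.le
  have B3 : lamk1 + θk * CQ + ηk * Sw / (4 * εw) + Cx * μ * ηk / 2 ≤ γB * lamk := by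
    calc lamk1 + θk * CQ + ηk * Sw / (4 * εw) + Cx * μ * ηk / 2
        = lamk * (lamk1 / lamk + (θk / lamk) * CQ
            + ηk * Sw / (4 * εw * lamk) + Cx * μ * ηk / (2 * lamk)) := by field_simp
      _ ≤ lamk * γB := mul_le_mul_of_nonneg_left hbal3 hlamk.le
      _ = γB * lamk := mul_comm _ _
  have B4 : θk1 + ηk * Su / (4 * εu) + Cx * ηk / (2 * μ) ≤ γB * θk := by
    calc θk1 + ηk * Su / (4 * εu) + Cx * ηk / (2 * μ)
        = θk * (θk1 / θk + ηk * Su / (4 * εu * θk) + Cx * ηk / (2 * μ * θk)) := by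
          field_simp
      _ ≤ θk * γB := mul_le_mul_of_nonneg_left hbal4 hθk.le
      _ = γB * θk := mul_comm _ _
  -- scaled products
  have C1 : (ηk * γtF + ηk * εu + ηk * εw + (lamk1 * πu + θk1 * πw)) * ‖xk1 - xb‖ ^ 2
      ≤ ηk * γF * ‖xk1 - xb‖ ^ 2 :=
    mul_le_mul_of_nonneg_right B1 (sq_nonneg _)
  have C3 : (lamk1 + θk * CQ + ηk * Sw / (4 * εw) + Cx * μ * ηk / 2) * ‖uk1 - ub‖ ^ 2
      ≤ γB * lamk * ‖uk1 - ub‖ ^ 2 :=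
    mul_le_mul_of_nonneg_right B3 (sq_nonneg _)
  have C4 : (θk1 + ηk * Su / (4 * εu) + Cx * ηk / (2 * μ)) * ‖wk1 - wb‖ ^ 2
      ≤ γB * θk * ‖wk1 - wb‖ ^ 2 :=
    mul_le_mul_of_nonneg_right B4 (sq_nonneg _)
  have C2 : ηk1 * γtGs * ‖yk1 - yb‖ ^ 2 ≤ ηk1 * γGs * ‖yk1 - yb‖ ^ 2 :=
    mul_le_mul_of_nonneg_right (mul_le_mul_of_nonneg_left hγtGs hηk1.le) (sq_nonneg _)
  have S1 : lamk * (γB * ‖uk1 - ub‖ ^ 2 - πu * ‖xk - xb‖ ^ 2) ≤ lamk * ‖uk - ub‖ ^ 2 :=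
    mul_le_mul_of_nonneg_left hsplit1 hlamk.le
  have S2 : θk * (γB * ‖wk1 - wb‖ ^ 2 - CQ * ‖uk1 - ub‖ ^ 2 - πw * ‖xk - xb‖ ^ 2)
      ≤ θk * ‖wk - wb‖ ^ 2 :=
    mul_le_mul_of_nonneg_left hsplit2 hθk.le
  have L1 : ηk * (γF * ‖xk1 - xb‖ ^ 2)
      ≤ ηk * (⟪pF, xk1 - xb⟫ + (b₂ wb (xk1 - xb) + b₃ ub wb (xk1 - xb)) + ⟪yb, K (xk1 - xb)⟫) := by
    rw [← e1]
    exact mul_le_mul_of_nonneg_left hF hηk.le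
  have L2 : ηk1 * (γGs * ‖yk1 - yb‖ ^ 2) ≤ ηk1 * ⟪pG - K xb, yk1 - yb⟫ :=
    mul_le_mul_of_nonneg_left hG hηk1.le
  have LT := mul_le_mul_of_nonneg_left hT hηk.le
  have d1 := sub_nonneg.mpr L1
  have d2 := sub_nonneg.mpr L2
  have d3 := sub_nonneg.mpr LT
  have d4 := sub_nonneg.mpr C1
  have d5 := sub_nonneg.mpr C2
  have d6 := sub_nonneg.mpr C3
  have d7 := sub_nonneg.mpr C4
  have d8 := sub_nonneg.mpr S1
  have d9 := sub_nonneg.mpr S2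
  have total := add_nonneg (add_nonneg (add_nonneg (add_nonneg (add_nonneg
    (add_nonneg (add_nonneg (add_nonneg d1 d2) d3) d4) d5) d6) d7) d8) d9
  rw [ge_iff_le, e2, e3, ← sub_nonneg]
  refine total.trans_eq ?_
  linear_combination (-ηk) * e4
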